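/- There exist four distinct Hamiltonian cycles x, y, z, w on 5 vertices and, for each t ∈ {x,y,z,w}, an integer cost matrix C_t satisfying the nine branching conditions (c_{12} ≤ c_{13}, c_{14}, c_{15}; c_{21} ≤ c_{23}, c_{24}, c_{25}; c_{31} > c_{32} > c_{34} > c_{35} in the chain sense c_{31}>c_{32}, c_{32}>c_{34}, c_{34}>c_{35}) under which t is the unique optimal tour; yet whenever additionally c_{41} > c_{42} neither z nor w can be optimal, and whenever additionally c_{41} ≤ c_{42} neither x nor y can be optimal. -/
import Mathlib


/-- A directed Hamiltonian cycle (tour) on `n` vertices, identified with its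
characteristic 0/1-matrix: `x i j = 1` iff the arc `(i,j)` is in the cycle. -/
def IsTour (n : ℕ) (x : Fin n → Fin n → ℤ) : Prop :=
  ∃ σ : Equiv.Perm (Fin n), σ.IsCycle ∧ σ.support = Finset.univ ∧
    ∀ i j, x i j = if σ i = j then 1 else 0

/-- Standard inner product of two `n × n` integer matrices/vectors. -/
def ip {n : ℕ} (x C : Fin n → Fin n → ℤ) : ℤ :=
  ∑ i, ∑ j, x i j * C i j

/-- The nine branching inequalities `(2)` of the paper. -/
def Conds (C : Fin 5 → Fin 5 → ℤ) : Prop :=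
  C 0 1 ≤ C 0 2 ∧ C 0 1 ≤ C 0 3 ∧ C 0 1 ≤ C 0 4 ∧
  C 1 0 ≤ C 1 2 ∧ C 1 0 ≤ C 1 3 ∧ C 1 0 ≤ C 1 4 ∧
  C 2 0 > C 2 1 ∧ C 2 1 > C 2 3 ∧ C 2 3 > C 2 4

/-- `t` is the unique optimal tour for the input `C`. -/
def UniqueOpt (t C : Fin 5 → Fin 5 → ℤ) : Prop :=
  ∀ s : Fin 5 → Fin 5 → ℤ, IsTour 5 s → s ≠ t → ip t C < ip s C

/-- `t` is an optimal tour for the input `C`. -/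
def Opt (t C : Fin 5 → Fin 5 → ℤ) : Prop :=
  ∀ s : Fin 5 → Fin 5 → ℤ, IsTour 5 s → ip t C ≤ ip s C

/-! ### Auxiliary machinery -/

/-- The 0/1 tour matrix associated to a permutation. -/
def tourOf (σ : Equiv.Perm (Fin 5)) : Fin 5 → Fin 5 → ℤ :=
  fun i j => if σ i = j then 1 else 0

lemma tour_iff (σ : Equiv.Perm (Fin 5)) :
    (σ.IsCycle ∧ σ.support = Finset.univ) ↔ (σ ≠ 1 ∧ σ ^ 5 = 1) := by
  constructor
  · rintro ⟨hc, hs⟩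
    have hord : orderOf σ = 5 := by
      rw [hc.orderOf, hs]; rfl
    refine ⟨?_, ?_⟩
    · intro h; rw [h] at hord; simp at hord
    · calc σ ^ 5 = σ ^ orderOf σ := by rw [hord]
        _ = 1 := pow_orderOf_eq_one σ
  · rintro ⟨h1, h5⟩
    have hd : orderOf σ ∣ 5 := orderOf_dvd_of_pow_eq_one h5
    have hord : orderOf σ = 5 := by
      rcases (Nat.prime_five).eq_one_or_self_of_dvd _ hd with h | h
      · exact absurd (orderOf_eq_one_iff.mp h) h1
      · exact h
    have hcard : Fintype.card (Fin 5) = 5 := rfl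
    have hc : σ.IsCycle := Equiv.Perm.isCycle_of_prime_order''
      (by rw [hcard]; exact Nat.prime_five) (by rw [hcard, hord])
    refine ⟨hc, Finset.eq_univ_of_card _ ?_⟩
    have := hc.orderOf
    omega

lemma isTour_tourOf (σ : Equiv.Perm (Fin 5)) (h1 : σ ≠ 1) (h5 : σ ^ 5 = 1) :
    IsTour 5 (tourOf σ) := by
  obtain ⟨hc, hs⟩ := (tour_iff σ).mpr ⟨h1, h5⟩
  exact ⟨σ, hc, hs, fun i j => rfl⟩

lemma ip_tourOf (σ : Equiv.Perm (Fin 5)) (C : Fin 5 → Fin 5 → ℤ) :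
    ip (tourOf σ) C = ∑ i, C i (σ i) := by
  unfold ip tourOf
  refine Finset.sum_congr rfl fun i _ => ?_
  simp [ite_mul]

lemma iter_of_pow (σ : Equiv.Perm (Fin 5)) (h5 : σ ^ 5 = 1) (i : Fin 5) :
    σ (σ (σ (σ (σ i)))) = i := by
  have : (σ ^ 5) i = i := by rw [h5]; rfl
  simpa [pow_succ, Equiv.Perm.mul_apply] using this

lemma vec_apply (σ : Equiv.Perm (Fin 5)) (i : Fin 5) :
    ![σ 0, σ 1, σ 2, σ 3, σ 4] i = σ i := by
  fin_cases i <;> rfl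

/-- Generic reduction of `UniqueOpt` to a finite check over quintuples. -/
lemma uniqueOpt_of (t : Equiv.Perm (Fin 5)) (C : Fin 5 → Fin 5 → ℤ)
    (hdec : ∀ a b c d e : Fin 5,
      (∀ i, ![a,b,c,d,e] (![a,b,c,d,e] (![a,b,c,d,e] (![a,b,c,d,e] (![a,b,c,d,e] i)))) = i) →
      ¬(a = t 0 ∧ b = t 1 ∧ c = t 2 ∧ d = t 3 ∧ e = t 4) →
      C 0 (t 0) + C 1 (t 1) + C 2 (t 2) + C 3 (t 3) + C 4 (t 4)
        < C 0 a + C 1 b + C 2 c + C 3 d + C 4 e) :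
    UniqueOpt (tourOf t) C := by
  intro s hs hne
  obtain ⟨σ, hc, hsup, hval⟩ := hs
  have hfun : s = tourOf σ := funext fun i => funext fun j => hval i j
  obtain ⟨h1, h5⟩ := (tour_iff σ).mp ⟨hc, hsup⟩
  have hiter : ∀ i, ![σ 0, σ 1, σ 2, σ 3, σ 4]
      (![σ 0, σ 1, σ 2, σ 3, σ 4] (![σ 0, σ 1, σ 2, σ 3, σ 4]
        (![σ 0, σ 1, σ 2, σ 3, σ 4] (![σ 0, σ 1, σ 2, σ 3, σ 4] i)))) = i := by
    intro i
    simp only [vec_apply]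
    exact iter_of_pow σ h5 i
  have hnet : ¬(σ 0 = t 0 ∧ σ 1 = t 1 ∧ σ 2 = t 2 ∧ σ 3 = t 3 ∧ σ 4 = t 4) := by
    rintro ⟨e0, e1, e2, e3, e4⟩
    have hst : σ = t := Equiv.ext fun i => by fin_cases i <;> assumption
    exact hne (hfun.trans (by rw [hst]))
  have key := hdec (σ 0) (σ 1) (σ 2) (σ 3) (σ 4) hiter hnet
  rw [hfun, ip_tourOf, ip_tourOf, Fin.sum_univ_five, Fin.sum_univ_five]
  exact key

/-! ### The four tours -/

def σx : Equiv.Perm (Fin 5) := ⟨![3,4,0,1,2], ![2,3,4,0,1], by decide, by decide⟩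
def σy : Equiv.Perm (Fin 5) := ⟨![4,2,0,1,3], ![2,3,1,4,0], by decide, by decide⟩
def σz : Equiv.Perm (Fin 5) := ⟨![2,4,1,0,3], ![3,2,0,4,1], by decide, by decide⟩
def σw : Equiv.Perm (Fin 5) := ⟨![4,3,1,0,2], ![3,2,4,1,0], by decide, by decide⟩

/-- Auxiliary tours used in the exchange arguments. -/
def σ1 : Equiv.Perm (Fin 5) := ⟨![2,0,4,1,3], ![1,3,0,4,2], by decide, by decide⟩
def σ2 : Equiv.Perm (Fin 5) := ⟨![4,0,3,1,2], ![1,3,4,2,0], by decide, by decide⟩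
def σ3 : Equiv.Perm (Fin 5) := ⟨![1,4,3,0,2], ![3,0,4,2,1], by decide, by decide⟩
def σ4 : Equiv.Perm (Fin 5) := ⟨![1,2,4,0,3], ![3,0,1,4,2], by decide, by decide⟩

/-! ### The four cost matrices -/

def Cmx : Fin 5 → Fin 5 → ℤ :=
  ![![100,0,100,0,100], ![0,100,100,100,0], ![3,2,100,1,0],
    ![100,0,100,100,100], ![100,100,0,100,100]]

def Cmy : Fin 5 → Fin 5 → ℤ :=
  ![![100,0,100,100,0], ![0,100,0,100,100], ![3,2,100,1,0],
    ![100,0,100,100,100], ![100,100,100,0,100]]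

def Cmz : Fin 5 → Fin 5 → ℤ :=
  ![![100,0,0,100,100], ![0,100,100,100,0], ![3,2,100,1,0],
    ![0,100,100,100,100], ![100,100,100,0,100]]

def Cmw : Fin 5 → Fin 5 → ℤ :=
  ![![100,0,100,100,0], ![0,100,100,0,100], ![3,2,100,1,0],
    ![0,100,100,100,100], ![100,100,0,100,100]]

theorem stmt13 :
    ∃ x y z w : Fin 5 → Fin 5 → ℤ,
      IsTour 5 x ∧ IsTour 5 y ∧ IsTour 5 z ∧ IsTour 5 w ∧
      x ≠ y ∧ x ≠ z ∧ x ≠ w ∧ y ≠ z ∧ y ≠ w ∧ z ≠ w ∧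
      (∃ Cx, Conds Cx ∧ UniqueOpt x Cx) ∧
      (∃ Cy, Conds Cy ∧ UniqueOpt y Cy) ∧
      (∃ Cz, Conds Cz ∧ UniqueOpt z Cz) ∧
      (∃ Cw, Conds Cw ∧ UniqueOpt w Cw) ∧
      (∀ C : Fin 5 → Fin 5 → ℤ, Conds C → C 3 0 > C 3 1 → ¬ Opt z C ∧ ¬ Opt w C) ∧
      (∀ C : Fin 5 → Fin 5 → ℤ, Conds C → C 3 0 ≤ C 3 1 → ¬ Opt x C ∧ ¬ Opt y C) := by
  refine ⟨tourOf σx, tourOf σy, tourOf σz, tourOf σw,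
    isTour_tourOf σx (by decide) (by decide),
    isTour_tourOf σy (by decide) (by decide),
    isTour_tourOf σz (by decide) (by decide),
    isTour_tourOf σw (by decide) (by decide),
    by decide, by decide, by decide, by decide, by decide, by decide,
    ⟨Cmx, by unfold Conds Cmx; decide, uniqueOpt_of σx Cmx (by decide)⟩,
    ⟨Cmy, by unfold Conds Cmy; decide, uniqueOpt_of σy Cmy (by decide)⟩,
    ⟨Cmz, by unfold Conds Cmz; decide, uniqueOpt_of σz Cmz (by decide)⟩,
    ⟨Cmw, by unfold Conds Cmw; decide, uniqueOpt_of σw Cmw (by decide)⟩,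
    ?_, ?_⟩
  · -- case c₄₁ > c₄₂ : neither z nor w optimal
    intro C hC h41
    obtain ⟨h1, h2, h3, h4, h5, h6, h7, h8, h9⟩ := hC
    constructor
    · intro hOpt
      have h := hOpt (tourOf σ1) (isTour_tourOf σ1 (by decide) (by decide))
      rw [ip_tourOf, ip_tourOf, Fin.sum_univ_five, Fin.sum_univ_five] at h
      have e : C 0 (σz 0) + C 1 (σz 1) + C 2 (σz 2) + C 3 (σz 3) + C 4 (σz 4)
          = C 0 2 + C 1 4 + C 2 1 + C 3 0 + C 4 3 := rfl
      have e1 : C 0 (σ1 0) + C 1 (σ1 1) + C 2 (σ1 2) + C 3 (σ1 3) + C 4 (σ1 4)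
          = C 0 2 + C 1 0 + C 2 4 + C 3 1 + C 4 3 := rfl
      rw [e, e1] at h
      linarith
    · intro hOpt
      have h := hOpt (tourOf σ2) (isTour_tourOf σ2 (by decide) (by decide))
      rw [ip_tourOf, ip_tourOf, Fin.sum_univ_five, Fin.sum_univ_five] at h
      have e : C 0 (σw 0) + C 1 (σw 1) + C 2 (σw 2) + C 3 (σw 3) + C 4 (σw 4)
          = C 0 4 + C 1 3 + C 2 1 + C 3 0 + C 4 2 := rfl
      have e1 : C 0 (σ2 0) + C 1 (σ2 1) + C 2 (σ2 2) + C 3 (σ2 3) + C 4 (σ2 4)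
          = C 0 4 + C 1 0 + C 2 3 + C 3 1 + C 4 2 := rfl
      rw [e, e1] at h
      linarith
  · -- case c₄₁ ≤ c₄₂ : neither x nor y optimal
    intro C hC h41
    obtain ⟨h1, h2, h3, h4, h5, h6, h7, h8, h9⟩ := hC
    constructor
    · intro hOpt
      have h := hOpt (tourOf σ3) (isTour_tourOf σ3 (by decide) (by decide))
      rw [ip_tourOf, ip_tourOf, Fin.sum_univ_five, Fin.sum_univ_five] at h
      have e : C 0 (σx 0) + C 1 (σx 1) + C 2 (σx 2) + C 3 (σx 3) + C 4 (σx 4)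
          = C 0 3 + C 1 4 + C 2 0 + C 3 1 + C 4 2 := rfl
      have e1 : C 0 (σ3 0) + C 1 (σ3 1) + C 2 (σ3 2) + C 3 (σ3 3) + C 4 (σ3 4)
          = C 0 1 + C 1 4 + C 2 3 + C 3 0 + C 4 2 := rfl
      rw [e, e1] at h
      linarith
    · intro hOpt
      have h := hOpt (tourOf σ4) (isTour_tourOf σ4 (by decide) (by decide))
      rw [ip_tourOf, ip_tourOf, Fin.sum_univ_five, Fin.sum_univ_five] at h
      have e : C 0 (σy 0) + C 1 (σy 1) + C 2 (σy 2) + C 3 (σy 3) + C 4 (σy 4)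
          = C 0 4 + C 1 2 + C 2 0 + C 3 1 + C 4 3 := rfl
      have e1 : C 0 (σ4 0) + C 1 (σ4 1) + C 2 (σ4 2) + C 3 (σ4 3) + C 4 (σ4 4)
          = C 0 1 + C 1 2 + C 2 4 + C 3 0 + C 4 3 := rfl
      rw [e, e1] at h
      linarith
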